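/- Let H be a complex Hilbert space, let a ∈ ℂ, let B : H → ℂ be a bounded linear functional, let C : ℂ → H be a bounded operator, and let D : H → H be a bounded operator with 1 − D invertible. Define the scalar φ = a + B((1 − D)⁻¹(C(1))) and assume φ ≠ 1. Let U = [a, B; C, D] be the block operator on ℂ ⊕ H (so 1 − U is invertible), and let T = i(1 + U)(1 − U)⁻¹ with block decomposition T = [T₁₁, T₁₂; T₂₁, T₂₂] on ℂ ⊕ H. Then: (i) T₁₁ = i(1 + φ)/(1 − φ) (as a scalar); (ii) T₂₁ = (2i/(1 − φ))·(1 − D)⁻¹C; (iii) T₁₂ = (2i/(1 − φ))·B(1 − D)⁻¹; (iv) T₂₂ = i(1 + D)(1 − D)⁻¹ + (2i/(1 − φ))·(1 − D)⁻¹CB(1 − D)⁻¹. -/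
import Mathlib


open ContinuousLinearMap

variable {H : Type*} [NormedAddCommGroup H] [InnerProductSpace ℂ H] [CompleteSpace H]

/-- The block operator `[A, B; C, D]` on `ℂ ⊕ H`, sending `(x, y)` to
`(A x + B y, C x + D y)`. -/
noncomputable def blockOp (A : ℂ →L[ℂ] ℂ) (B : H →L[ℂ] ℂ)
    (C : ℂ →L[ℂ] H) (D : H →L[ℂ] H) : (ℂ × H) →L[ℂ] (ℂ × H) :=
  (A.comp (ContinuousLinearMap.fst ℂ ℂ H) + B.comp (ContinuousLinearMap.snd ℂ ℂ H)).prod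
    (C.comp (ContinuousLinearMap.fst ℂ ℂ H) + D.comp (ContinuousLinearMap.snd ℂ ℂ H))

lemma blockOp_apply (A : ℂ →L[ℂ] ℂ) (B : H →L[ℂ] ℂ)
    (C : ℂ →L[ℂ] H) (D : H →L[ℂ] H) (x : ℂ) (y : H) :
    blockOp A B C D (x, y) = (A x + B y, C x + D y) := rfl

set_option maxHeartbeats 2000000 in
theorem concrete_cayley_blocks
    (a : ℂ) (B : H →L[ℂ] ℂ) (C : ℂ →L[ℂ] H) (D : H →L[ℂ] H)
    (hD : IsUnit (1 - D))
    (φ : ℂ) (hφdef : φ = a + B ((Ring.inverse (1 - D)) (C 1)))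
    (hφ : φ ≠ 1)
    (U : (ℂ × H) →L[ℂ] (ℂ × H))
    (hUdef : U = blockOp (a • (1 : ℂ →L[ℂ] ℂ)) B C D)
    (T : (ℂ × H) →L[ℂ] (ℂ × H))
    (hTdef : T = Complex.I • ((1 + U) * Ring.inverse (1 - U)))
    (T₁₁ : ℂ →L[ℂ] ℂ)
    (hT₁₁ : T₁₁ = (ContinuousLinearMap.fst ℂ ℂ H) ∘L T ∘L (ContinuousLinearMap.inl ℂ ℂ H))
    (T₁₂ : H →L[ℂ] ℂ)
    (hT₁₂ : T₁₂ = (ContinuousLinearMap.fst ℂ ℂ H) ∘L T ∘L (ContinuousLinearMap.inr ℂ ℂ H))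
    (T₂₁ : ℂ →L[ℂ] H)
    (hT₂₁ : T₂₁ = (ContinuousLinearMap.snd ℂ ℂ H) ∘L T ∘L (ContinuousLinearMap.inl ℂ ℂ H))
    (T₂₂ : H →L[ℂ] H)
    (hT₂₂ : T₂₂ = (ContinuousLinearMap.snd ℂ ℂ H) ∘L T ∘L (ContinuousLinearMap.inr ℂ ℂ H)) :
    T₁₁ = (Complex.I * (1 + φ) / (1 - φ)) • (1 : ℂ →L[ℂ] ℂ) ∧
      T₂₁ = (2 * Complex.I / (1 - φ)) • ((Ring.inverse (1 - D)) ∘L C) ∧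
      T₁₂ = (2 * Complex.I / (1 - φ)) • (B ∘L (Ring.inverse (1 - D))) ∧
      T₂₂ = Complex.I • ((1 + D) * Ring.inverse (1 - D)) +
        (2 * Complex.I / (1 - φ)) •
          ((Ring.inverse (1 - D)) ∘L C ∘L B ∘L (Ring.inverse (1 - D))) := by
  set E : H →L[ℂ] H := Ring.inverse (1 - D) with hE
  have hE1 : ∀ v : H, (1 - D) (E v) = v := by
    intro v
    have h := Ring.mul_inverse_cancel (1 - D) hD
    calc (1 - D) (E v) = ((1 - D) * E) v := rfl
      _ = v := by rw [← hE] at h; rw [h]; rfl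
  have hE2 : ∀ v : H, E ((1 - D) v) = v := by
    intro v
    have h := Ring.inverse_mul_cancel (1 - D) hD
    calc E ((1 - D) v) = (E * (1 - D)) v := rfl
      _ = v := by rw [← hE] at h; rw [h]; rfl
  have hDE : ∀ v : H, D (E v) = E v - v := by
    intro v
    have h := hE1 v
    rw [ContinuousLinearMap.sub_apply, ContinuousLinearMap.one_apply] at h
    exact eq_sub_iff_add_eq.mpr (sub_eq_iff_eq_add'.mp h).symm
  have hED : ∀ v : H, E (D v) = E v - v := by
    intro v
    have h := hE2 v
    rw [ContinuousLinearMap.sub_apply, ContinuousLinearMap.one_apply, map_sub] at h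
    exact eq_sub_iff_add_eq.mpr (sub_eq_iff_eq_add'.mp h).symm
  set c0 : H := C 1 with hc0
  have hCx : ∀ t : ℂ, C t = t • c0 := by
    intro t; rw [hc0, ← map_smul, smul_eq_mul, mul_one]
  have hBEc0 : B (E c0) = φ - a := by rw [hφdef]; ring_nf
  have hs : (1 : ℂ) - φ ≠ 0 := sub_ne_zero.mpr (Ne.symm hφ)
  set V : (ℂ × H) →L[ℂ] (ℂ × H) :=
    blockOp ((1 - φ)⁻¹ • 1) ((1 - φ)⁻¹ • (B ∘L E)) ((1 - φ)⁻¹ • (E ∘L C))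
      (E + (1 - φ)⁻¹ • ((E ∘L C) ∘L (B ∘L E))) with hV
  have h1 : (1 - U) * V = 1 := by
    refine ContinuousLinearMap.ext fun v => ?_
    obtain ⟨x, y⟩ := v
    rw [ContinuousLinearMap.mul_apply, ContinuousLinearMap.one_apply]
    simp only [hV, hUdef, blockOp_apply, ContinuousLinearMap.sub_apply,
      ContinuousLinearMap.one_apply, ContinuousLinearMap.add_apply,
      ContinuousLinearMap.smul_apply, ContinuousLinearMap.comp_apply, map_add, map_smul,
      map_sub, smul_eq_mul, Prod.mk_sub_mk, hCx, hDE, hED, hBEc0]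
    refine Prod.ext ?_ ?_
    · simp only [map_add, map_smul, smul_eq_mul, hBEc0]
      field_simp
      ring
    · simp only [map_add, map_smul, smul_eq_mul, hDE, hED, hBEc0]
      match_scalars <;> field_simp <;> ring
  have h2 : V * (1 - U) = 1 := by
    refine ContinuousLinearMap.ext fun v => ?_
    obtain ⟨x, y⟩ := v
    rw [ContinuousLinearMap.mul_apply, ContinuousLinearMap.one_apply]
    simp only [hV, hUdef, blockOp_apply, ContinuousLinearMap.sub_apply,
      ContinuousLinearMap.one_apply, ContinuousLinearMap.add_apply,
      ContinuousLinearMap.smul_apply, ContinuousLinearMap.comp_apply, map_add, map_smul,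
      map_sub, smul_eq_mul, Prod.mk_sub_mk, hCx, hDE, hED, hBEc0]
    refine Prod.ext ?_ ?_
    · simp only [map_add, map_smul, map_sub, smul_eq_mul, hED, hBEc0]
      field_simp
      ring
    · simp only [map_add, map_smul, map_sub, smul_eq_mul, hDE, hED, hBEc0]
      match_scalars <;> field_simp <;> ring
  have hUnit : IsUnit (1 - U) := ⟨⟨1 - U, V, h1, h2⟩, rfl⟩
  have hVeq : Ring.inverse (1 - U) = V := by
    have h := Ring.mul_inverse_cancel (1 - U) hUnit
    calc Ring.inverse (1 - U) = 1 * Ring.inverse (1 - U) := (one_mul _).symm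
      _ = (V * (1 - U)) * Ring.inverse (1 - U) := by rw [h2]
      _ = V * ((1 - U) * Ring.inverse (1 - U)) := mul_assoc _ _ _
      _ = V := by rw [h, mul_one]
  have hTdef' : T = Complex.I • ((1 + U) * V) := by rw [hTdef, hVeq]
  refine ⟨?_, ?_, ?_, ?_⟩
  · refine ContinuousLinearMap.ext fun x => ?_
    simp only [hT₁₁, hTdef', ContinuousLinearMap.comp_apply,
      ContinuousLinearMap.inl_apply, ContinuousLinearMap.smul_apply,
      ContinuousLinearMap.mul_apply, ContinuousLinearMap.add_apply,
      ContinuousLinearMap.one_apply, hV, hUdef, blockOp_apply, ContinuousLinearMap.coe_fst',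
      Prod.smul_mk, Prod.fst_add, map_add, map_smul, map_zero, smul_eq_mul, hCx, hBEc0, hDE, hED]
    field_simp
    ring
  · refine ContinuousLinearMap.ext fun x => ?_
    simp only [hT₂₁, hTdef', ContinuousLinearMap.comp_apply,
      ContinuousLinearMap.inl_apply, ContinuousLinearMap.smul_apply,
      ContinuousLinearMap.mul_apply, ContinuousLinearMap.add_apply,
      ContinuousLinearMap.one_apply, hV, hUdef, blockOp_apply, ContinuousLinearMap.coe_snd',
      Prod.smul_mk, map_add, map_smul, map_zero, smul_eq_mul, hCx, hBEc0, hDE, hED]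
    match_scalars <;> field_simp <;> ring
  · refine ContinuousLinearMap.ext fun y => ?_
    simp only [hT₁₂, hTdef', ContinuousLinearMap.comp_apply,
      ContinuousLinearMap.inr_apply, ContinuousLinearMap.smul_apply,
      ContinuousLinearMap.mul_apply, ContinuousLinearMap.add_apply,
      ContinuousLinearMap.one_apply, hV, hUdef, blockOp_apply, ContinuousLinearMap.coe_fst',
      Prod.smul_mk, map_add, map_smul, map_zero, smul_eq_mul, hCx, hBEc0, hDE, hED]
    field_simp
    ring
  · refine ContinuousLinearMap.ext fun y => ?_
    simp only [hT₂₂, hTdef', ContinuousLinearMap.comp_apply,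
      ContinuousLinearMap.inr_apply, ContinuousLinearMap.smul_apply,
      ContinuousLinearMap.mul_apply, ContinuousLinearMap.add_apply,
      ContinuousLinearMap.one_apply, hV, hUdef, blockOp_apply, ContinuousLinearMap.coe_snd',
      Prod.smul_mk, map_add, map_smul, map_zero, smul_eq_mul, hCx, hBEc0, hDE, hED]
    match_scalars <;> field_simp <;> ring
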